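/- Let n ∈ ℕ, p > q > 0, and α > 0. Let z ∈ ℝⁿ be a vector each of whose coordinates equals either √α·p or √α·q, and let V₁ = {i : z_i = √α·p}. Let ẑ ∈ ℝⁿ be arbitrary, set the threshold τ = √α·(p+q)/2, and let V̂₁ = {i : ẑ_i > τ}. Let E = (V₁ \ V̂₁) ∪ (V̂₁ \ V₁) be the set of misclassified coordinates. Then |E| ≤ 4‖ẑ − z‖² / (α·(p−q)²), where ‖·‖ is the Euclidean norm. -/

import Mathlib

open Matrix

/-- The `j`-th largest singular value (1-indexed) of a real `n × m` matrix,
defined as the square root of the `j`-th largest eigenvalue of `Aᵀ * A`;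
it is `0` when `j = 0` or `j > m`. -/
noncomputable def sval {n m : ℕ} (A : Matrix (Fin n) (Fin m) ℝ) (j : ℕ) : ℝ :=
  if 1 ≤ j ∧ j ≤ m then
    (((Finset.univ.val.map fun i =>
        Real.sqrt ((show (Aᵀ * A).IsHermitian by simpa using Matrix.isHermitian_conjTranspose_mul_self A).eigenvalues i)).sort (· ≤ ·)).getD
      (m - j) 0)
  else 0

/-- The spectral norm (ℓ₂ operator norm) of a real matrix, i.e. its largest singular value. -/
noncomputable def matrixSpectralNorm {n m : ℕ} (A : Matrix (Fin n) (Fin m) ℝ) : ℝ := sval A 1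

/-- Euclidean norm of a vector. -/
noncomputable def evnorm {n : ℕ} (x : Fin n → ℝ) : ℝ := Real.sqrt (∑ i, (x i) ^ 2)

/-- `M^{1/2}`: the unique positive semidefinite square root of a positive semidefinite
real matrix (junk value `0` if `M` is not positive semidefinite). -/
noncomputable def msqrt {k : ℕ} (M : Matrix (Fin k) (Fin k) ℝ) : Matrix (Fin k) (Fin k) ℝ :=
  by classical exact if h : M.PosSemidef then ((h.1.eigenvectorUnitary : Matrix (Fin k) (Fin k) ℝ) * diagonal (fun i => Real.sqrt (h.1.eigenvalues i)) * (star h.1.eigenvectorUnitary : Matrix (Fin k) (Fin k) ℝ)) else 0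

open scoped Classical in
/-- thresholding error bound. If each coordinate of `z` equals `√α·p` or
`√α·q`, `V₁` is the set of coordinates equal to `√α·p`, and `V̂₁` is the set of coordinates
of `ẑ` exceeding the threshold `τ = √α(p+q)/2`, then the number of misclassified coordinates
is at most `4‖ẑ − z‖²/(α(p−q)²)`. -/
theorem thresholding_error_bound
    {n : ℕ} (p q α : ℝ) (hq : 0 < q) (hpq : q < p) (hα : 0 < α)
    (z zhat : Fin n → ℝ)
    (hz : ∀ i, z i = Real.sqrt α * p ∨ z i = Real.sqrt α * q)
    (V₁ Vhat₁ : Finset (Fin n))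
    (hV₁ : V₁ = Finset.univ.filter fun i => z i = Real.sqrt α * p)
    (τ : ℝ) (hτ : τ = Real.sqrt α * (p + q) / 2)
    (hVhat₁ : Vhat₁ = Finset.univ.filter fun i => zhat i > τ)
    (E : Finset (Fin n)) (hE : E = (V₁ \ Vhat₁) ∪ (Vhat₁ \ V₁)) :
    (E.card : ℝ) ≤ 4 * evnorm (zhat - z) ^ 2 / (α * (p - q) ^ 2) := by
  have hsa : Real.sqrt α > 0 := Real.sqrt_pos.mpr hα
  have hsq : Real.sqrt α ^ 2 = α := Real.sq_sqrt hα.le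
  have hd : 0 < α * (p - q) ^ 2 := by
    have h1 : 0 < p - q := sub_pos.mpr hpq
    positivity
  -- key bound per element of E
  have key : ∀ i ∈ E, α * (p - q) ^ 2 / 4 ≤ (zhat i - z i) ^ 2 := by
    intro i hi
    have hb : Real.sqrt α * (p - q) / 2 ≤ |zhat i - z i| := by
      rw [hE, Finset.mem_union, Finset.mem_sdiff, Finset.mem_sdiff, hV₁, hVhat₁] at hi
      simp only [Finset.mem_filter, Finset.mem_univ, true_and, not_lt] at hi
      rcases hi with ⟨hzp, hle⟩ | ⟨hgt, hne⟩
      · have : zhat i - z i ≤ -(Real.sqrt α * (p - q) / 2) := by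
          rw [hzp]; rw [hτ] at hle; nlinarith
        calc Real.sqrt α * (p - q) / 2 ≤ -(zhat i - z i) := by linarith
          _ ≤ |zhat i - z i| := neg_le_abs _
      · have hzq : z i = Real.sqrt α * q := (hz i).resolve_left hne
        have : Real.sqrt α * (p - q) / 2 ≤ zhat i - z i := by
          rw [hzq]; rw [hτ] at hgt; nlinarith
        exact this.trans (le_abs_self _)
    have h0 : 0 ≤ Real.sqrt α * (p - q) / 2 := by
      have h1 : 0 < p - q := sub_pos.mpr hpq
      positivity
    have := sq_le_sq' (by linarith [abs_nonneg (zhat i - z i)] : -(|zhat i - z i|) ≤ Real.sqrt α * (p - q) / 2) hb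
    rw [sq_abs] at this
    nlinarith
  have hsum : (E.card : ℝ) * (α * (p - q) ^ 2 / 4) ≤ ∑ i, (zhat i - z i) ^ 2 := by
    calc (E.card : ℝ) * (α * (p - q) ^ 2 / 4) = ∑ _i ∈ E, α * (p - q) ^ 2 / 4 := by
          rw [Finset.sum_const, nsmul_eq_mul]
      _ ≤ ∑ i ∈ E, (zhat i - z i) ^ 2 := Finset.sum_le_sum key
      _ ≤ ∑ i, (zhat i - z i) ^ 2 :=
          Finset.sum_le_sum_of_subset_of_nonneg (Finset.subset_univ E) (by intros; positivity)
  have hev : evnorm (zhat - z) ^ 2 = ∑ i, (zhat i - z i) ^ 2 := by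
    rw [evnorm, Real.sq_sqrt (by positivity)]; rfl
  rw [hev, le_div_iff₀ hd]
  nlinarith
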